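/- Let 0 ≤ k₁ ≤ k₂ ≤ ⋯ ≤ k_N be strikes with prices q₁, …, q_N ∈ ℝ such that q_N > 0, let k ≥ 0, let d ≥ 2 be an even integer and M > 0. Let F be the set of Borel probability measures μ on [0,∞) with ∫ max(0, x − k_j) dμ(x) = q_j for all j ∈ [N] and ∫ x^d dμ(x) ≤ M. If the infimum of ∫ max(0, x − k) dμ(x) over F is attained, then it is attained by a finitely atomic measure μ* (a finite sum of positive multiples of Dirac measures) such that the restriction of μ* to (k_N, ∞) consists of exactly one atom (i.e. there is exactly one point x* > k_N with μ*({x*}) > 0 and μ*((k_N, ∞) \ {x*}) = 0), and moreover each of the intervals [0, k₁], [k₁, k₂], …, [k_{N−1}, k_N] contains at most one atom of μ*. -/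

import Mathlib

open MeasureTheory Set

noncomputable def mos (m : Multiset (ℝ × ℝ)) : Measure ℝ :=
  (m.map (fun p => ENNReal.ofReal p.1 • Measure.dirac p.2)).sum

lemma mos_cons (p : ℝ × ℝ) (m : Multiset (ℝ × ℝ)) :
    mos (p ::ₘ m) = ENNReal.ofReal p.1 • Measure.dirac p.2 + mos m := by
  simp [mos]

lemma integrable_dirac' (g : ℝ → ℝ) (a : ℝ) : Integrable g (Measure.dirac a) :=
  (integrable_const (g a)).congr (MeasureTheory.ae_eq_dirac g).symm

lemma integrable_mos (g : ℝ → ℝ) (m : Multiset (ℝ × ℝ)) :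
    Integrable g (mos m) := by
  induction m using Multiset.induction_on with
  | empty => simp only [mos, Multiset.map_zero, Multiset.sum_zero]; exact integrable_zero_measure
  | cons p m ih =>
      rw [mos_cons]
      exact Integrable.add_measure
        ((integrable_dirac' g p.2).smul_measure ENNReal.ofReal_ne_top) ih

lemma integral_mos (g : ℝ → ℝ) (m : Multiset (ℝ × ℝ))
    (hw : ∀ p ∈ m, 0 ≤ p.1) :
    ∫ x, g x ∂(mos m) = (m.map (fun p => p.1 * g p.2)).sum := by
  induction m using Multiset.induction_on with
  | empty => simp [mos]
  | cons p m ih =>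
      rw [mos_cons, integral_add_measure
        ((integrable_dirac' g p.2).smul_measure ENNReal.ofReal_ne_top) (integrable_mos g m),
        integral_smul_measure, integral_dirac, Multiset.map_cons, Multiset.sum_cons,
        ih (fun q hq => hw q (Multiset.mem_cons_of_mem hq))]
      rw [ENNReal.toReal_ofReal (hw p (Multiset.mem_cons_self p m))]
      simp

lemma mos_apply (m : Multiset (ℝ × ℝ)) (s : Set ℝ) :
    mos m s = (m.map (fun p => ENNReal.ofReal p.1 * Measure.dirac p.2 s)).sum := by
  induction m using Multiset.induction_on with
  | empty => simp [mos]
  | cons p m ih => simp [mos_cons, ih]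

lemma mos_eq_zero {m : Multiset (ℝ × ℝ)} {s : Set ℝ} (hs : MeasurableSet s)
    (h : ∀ p ∈ m, p.2 ∉ s) : mos m s = 0 := by
  rw [mos_apply]
  refine Multiset.sum_eq_zero ?_
  intro x hx
  rcases Multiset.mem_map.1 hx with ⟨p, hp, rfl⟩
  rw [Measure.dirac_apply' _ hs, Set.indicator_of_notMem (h p hp)]
  simp

lemma mos_singleton_pos {m : Multiset (ℝ × ℝ)} (hw : ∀ p ∈ m, 0 < p.1) (x : ℝ) :
    0 < mos m {x} ↔ ∃ p ∈ m, p.2 = x := by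
  constructor
  · intro h
    by_contra hc
    push_neg at hc
    rw [mos_eq_zero (measurableSet_singleton x) (fun p hp hx => hc p hp hx)] at h
    exact lt_irrefl _ h
  · rintro ⟨p, hp, rfl⟩
    rw [mos_apply]
    refine lt_of_lt_of_le ?_ (Multiset.single_le_sum (fun _ _ => zero_le)
      (ENNReal.ofReal p.1 * Measure.dirac p.2 {p.2})
      (Multiset.mem_map_of_mem _ hp))
    rw [Measure.dirac_apply_of_mem (Set.mem_singleton _)]
    simp [ENNReal.ofReal_pos.2 (hw p hp)]

lemma mos_fin_sum (m : Multiset (ℝ × ℝ)) :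
    mos m = ∑ i : Fin m.toList.length,
      ENNReal.ofReal (m.toList.get i).1 • Measure.dirac (m.toList.get i).2 := by
  have : ∑ i : Fin m.toList.length,
      ENNReal.ofReal (m.toList.get i).1 • Measure.dirac (m.toList.get i).2
      = (m.toList.map (fun p => ENNReal.ofReal p.1 • Measure.dirac p.2)).sum := by
    exact Fin.sum_univ_fun_getElem m.toList (fun p : ℝ × ℝ => ENNReal.ofReal p.1 • Measure.dirac p.2)
  rw [this, mos]
  conv_lhs => rw [← Multiset.coe_toList m]
  rfl

-- region jensen
lemma region_jensen (μ : Measure ℝ) [IsFiniteMeasure μ] (A : Set ℝ) (hA : MeasurableSet A)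
    (hne : μ A ≠ 0) (g : ℝ → ℝ) (hg : ConvexOn ℝ Set.univ g) (hgc : Continuous g)
    (hid : Integrable (fun x => x) (μ.restrict A)) (hgi : Integrable g (μ.restrict A)) :
    (μ A).toReal * g ((∫ x in A, x ∂μ) / (μ A).toReal) ≤ ∫ x in A, g x ∂μ := by
  have huniv : (μ.restrict A) Set.univ = μ A := by
    rw [Measure.restrict_apply_univ]
  haveI : NeZero (μ.restrict A) := ⟨by
    intro h0
    rw [h0] at huniv
    exact hne (by simpa using huniv.symm)⟩
  have h := hg.map_average_le hgc.continuousOn isClosed_univ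
    (Filter.Eventually.of_forall (fun x => Set.mem_univ x)) hid hgi
  rw [average_eq, average_eq, measureReal_def, huniv] at h
  have ht : 0 < (μ A).toReal := ENNReal.toReal_pos hne (measure_ne_top μ A)
  have h' : g ((μ A).toReal⁻¹ * ∫ x in A, x ∂μ) ≤ (μ A).toReal⁻¹ * ∫ x in A, g x ∂μ := by
    simpa [smul_eq_mul] using h
  rw [div_eq_inv_mul]
  calc (μ A).toReal * g ((μ A).toReal⁻¹ * ∫ x in A, x ∂μ)
      ≤ (μ A).toReal * ((μ A).toReal⁻¹ * ∫ x in A, g x ∂μ) := by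
        exact mul_le_mul_of_nonneg_left h' ht.le
    _ = ∫ x in A, g x ∂μ := by field_simp

lemma bary_le (μ : Measure ℝ) [IsFiniteMeasure μ] (A : Set ℝ)
    (hne : μ A ≠ 0) (c : ℝ) (hc : ∀ᵐ x ∂(μ.restrict A), x ≤ c)
    (hid : Integrable (fun x => x) (μ.restrict A)) :
    (∫ x in A, x ∂μ) / (μ A).toReal ≤ c := by
  have ht : 0 < (μ A).toReal := ENNReal.toReal_pos hne (measure_ne_top μ A)
  rw [div_le_iff₀ ht]
  calc ∫ x in A, x ∂μ ≤ ∫ _ in A, c ∂μ :=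
        setIntegral_mono_ae_restrict hid (integrable_const c) hc
    _ = (μ A).toReal • c := setIntegral_const c
    _ = c * (μ A).toReal := by rw [smul_eq_mul]; ring

lemma bary_ge (μ : Measure ℝ) [IsFiniteMeasure μ] (A : Set ℝ)
    (hne : μ A ≠ 0) (a : ℝ) (ha : ∀ᵐ x ∂(μ.restrict A), a ≤ x)
    (hid : Integrable (fun x => x) (μ.restrict A)) :
    a ≤ (∫ x in A, x ∂μ) / (μ A).toReal := by
  have ht : 0 < (μ A).toReal := ENNReal.toReal_pos hne (measure_ne_top μ A)
  rw [le_div_iff₀ ht]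
  calc a * (μ A).toReal = (μ A).toReal • a := by rw [smul_eq_mul]; ring
    _ = ∫ _ in A, a ∂μ := (setIntegral_const a).symm
    _ ≤ ∫ x in A, x ∂μ := setIntegral_mono_ae_restrict (integrable_const a) hid ha

-- convexity of the call payoff
lemma convexOn_call (k : ℝ) : ConvexOn ℝ Set.univ (fun x : ℝ => max 0 (x - k)) := by
  refine ⟨convex_univ, ?_⟩
  intro x _ y _ a b ha hb hab
  simp only [smul_eq_mul]
  refine max_le ?_ ?_
  · positivity
  · have h1 : x - k ≤ max 0 (x - k) := le_max_right _ _
    have h2 : y - k ≤ max 0 (y - k) := le_max_right _ _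
    calc a * x + b * y - k = a * (x - k) + b * (y - k) := by linear_combination k * hab
      _ ≤ a * max 0 (x - k) + b * max 0 (y - k) :=
          add_le_add (mul_le_mul_of_nonneg_left h1 ha) (mul_le_mul_of_nonneg_left h2 hb)

lemma continuous_call (k : ℝ) : Continuous (fun x : ℝ => max 0 (x - k)) :=
  continuous_const.max (continuous_id.sub continuous_const)

-- two-point merge inequalities
lemma merge_convex {g : ℝ → ℝ} (hg : ConvexOn ℝ Set.univ g) {wx wy x y : ℝ}
    (hwx : 0 < wx) (hwy : 0 < wy) :
    (wx + wy) * g ((wx * x + wy * y) / (wx + wy)) ≤ wx * g x + wy * g y := by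
  have hw : 0 < wx + wy := by linarith
  have := hg.2 (Set.mem_univ x) (Set.mem_univ y)
    (le_of_lt (div_pos hwx hw)) (le_of_lt (div_pos hwy hw))
    (by field_simp)
  simp only [smul_eq_mul] at this
  have harg : wx / (wx + wy) * x + wy / (wx + wy) * y = (wx * x + wy * y) / (wx + wy) := by
    field_simp
  rw [harg] at this
  have := mul_le_mul_of_nonneg_left this hw.le
  calc (wx + wy) * g ((wx * x + wy * y) / (wx + wy)) ≤
      (wx + wy) * (wx / (wx + wy) * g x + wy / (wx + wy) * g y) := this
    _ = wx * g x + wy * g y := by field_simp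

lemma merge_mem_Icc {wx wy x y a c : ℝ} (hwx : 0 < wx) (hwy : 0 < wy)
    (hx : x ∈ Set.Icc a c) (hy : y ∈ Set.Icc a c) :
    (wx * x + wy * y) / (wx + wy) ∈ Set.Icc a c := by
  have hw : 0 < wx + wy := by linarith
  constructor
  · rw [le_div_iff₀ hw]; nlinarith [hx.1, hy.1]
  · rw [div_le_iff₀ hw]; nlinarith [hx.2, hy.2]

lemma merge_affine {wx wy x y α β : ℝ} (hw : wx + wy ≠ 0) :
    (wx + wy) * (α * ((wx * x + wy * y) / (wx + wy)) + β)
      = wx * (α * x + β) + wy * (α * y + β) := by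
  field_simp
  ring

section defs

def GoodRep (F : Set (Measure ℝ)) (k kN S : ℝ) (m : Multiset (ℝ × ℝ)) : Prop :=
  (∀ p ∈ m, 0 < p.1 ∧ 0 ≤ p.2) ∧ mos m ∈ F ∧ (∫ x, max 0 (x - k) ∂(mos m)) = S ∧
  ∃ xs, kN < xs ∧ (∃ p ∈ m, p.2 = xs) ∧ ∀ p ∈ m, p.2 ≤ kN ∨ p.2 = xs

def IsCell (N : ℕ) (ks : Fin N → ℝ) (k₁ : ℝ) (a c : ℝ) : Prop :=
  (a = 0 ∧ c = k₁) ∨ ∃ j : ℕ, ∃ hj : j + 1 < N, a = ks ⟨j, by omega⟩ ∧ c = ks ⟨j + 1, hj⟩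

def BadPair (N : ℕ) (ks : Fin N → ℝ) (k₁ : ℝ) (m : Multiset (ℝ × ℝ)) : Prop :=
  ∃ p₁ ∈ m, ∃ p₂ ∈ m.erase p₁, p₁.2 ≠ p₂.2 ∧ ∃ a c : ℝ,
    IsCell N ks k₁ a c ∧ p₁.2 ∈ Set.Icc a c ∧ p₂.2 ∈ Set.Icc a c

end defs

section cells

variable {N : ℕ} (hN : 0 < N) {ks : Fin N → ℝ} (hmono : Monotone ks) {k₁ kN : ℝ}
  (hk₁ : k₁ = ks ⟨0, hN⟩) (hk₁0 : 0 ≤ k₁) (hkN : kN = ks ⟨N - 1, Nat.sub_lt hN one_pos⟩)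

include hmono hk₁ in
lemma cell_affine {a c : ℝ} (hcell : IsCell N ks k₁ a c) (i : Fin N) :
    (∀ z ∈ Set.Icc a c, max 0 (z - ks i) = 0) ∨
    (∀ z ∈ Set.Icc a c, max 0 (z - ks i) = z - ks i) := by
  rcases hcell with ⟨rfl, rfl⟩ | ⟨j, hj, rfl, rfl⟩
  · left
    intro z hz
    have : z ≤ ks i := le_trans hz.2 (hk₁ ▸ hmono (show (⟨0, hN⟩ : Fin N) ≤ i by simp [Fin.le_def]))
    exact max_eq_left (by linarith)
  · by_cases hij : i.val ≤ j
    · right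
      intro z hz
      have : ks i ≤ z := le_trans (hmono (show i ≤ ⟨j, by omega⟩ by simp [Fin.le_def, hij])) hz.1
      exact max_eq_right (by linarith)
    · left
      intro z hz
      have : z ≤ ks i := le_trans hz.2 (hmono (show (⟨j+1, hj⟩ : Fin N) ≤ i by
        simp [Fin.le_def]; omega))
      exact max_eq_left (by linarith)

include hmono hk₁ hk₁0 hkN in
lemma cell_bounds {a c : ℝ} (hcell : IsCell N ks k₁ a c) : 0 ≤ a ∧ c ≤ kN := by
  rcases hcell with ⟨rfl, rfl⟩ | ⟨j, hj, rfl, rfl⟩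
  · exact ⟨le_refl 0, hk₁ ▸ hkN ▸ hmono (by simp [Fin.le_def])⟩
  · constructor
    · refine le_trans hk₁0 (hk₁ ▸ hmono (by simp [Fin.le_def]))
    · exact hkN ▸ hmono (by simp [Fin.le_def]; omega)

end cells
section merge

variable {N : ℕ} (hN : 0 < N) {ks : Fin N → ℝ} {q : Fin N → ℝ} (hmono : Monotone ks)
  {k₁ kN : ℝ} (hk₁ : k₁ = ks ⟨0, hN⟩) (hk₁0 : 0 ≤ k₁)
  (hkN : kN = ks ⟨N - 1, Nat.sub_lt hN one_pos⟩)
  {d : ℕ} (hdeven : Even d) {M : ℝ} {F : Set (Measure ℝ)}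
  (hF : F = {μ | IsProbabilityMeasure μ ∧ μ (Set.Iio 0) = 0 ∧
      (∀ j, Integrable (fun x => max 0 (x - ks j)) μ ∧
        ∫ x, max 0 (x - ks j) ∂μ = q j) ∧
      Integrable (fun x => x ^ d) μ ∧ ∫ x, x ^ d ∂μ ≤ M})
  {k S : ℝ} (hlb : ∀ ν ∈ F, S ≤ ∫ x, max 0 (x - k) ∂ν)

include hN hmono hk₁ hk₁0 hkN hdeven hF hlb in
lemma merge_step {m : Multiset (ℝ × ℝ)} (hG : GoodRep F k kN S m)
    (hB : BadPair N ks k₁ m) :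
    ∃ m', GoodRep F k kN S m' ∧ Multiset.card m' < Multiset.card m := by
  obtain ⟨p₁, hp₁, p₂, hp₂, hpos_ne, a, c, hcell, hx, hy⟩ := hB
  obtain ⟨hWm, hFm, hObjm, xs, hxs, hxsmem, hxsall⟩ := hG
  obtain ⟨wx, x⟩ := p₁
  obtain ⟨wy, y⟩ := p₂
  simp only at hx hy hpos_ne
  set rest := (m.erase (wx, x)).erase (wy, y) with hrest
  have hm2 : m = (wx, x) ::ₘ (wy, y) ::ₘ rest := by
    rw [hrest, Multiset.cons_erase hp₂, Multiset.cons_erase hp₁]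
  have hwx : 0 < wx := (hWm _ hp₁).1
  have hp₂m : (wy, y) ∈ m := Multiset.mem_of_mem_erase hp₂
  have hwy : 0 < wy := (hWm _ hp₂m).1
  have hw : 0 < wx + wy := by linarith
  set b := (wx * x + wy * y) / (wx + wy) with hbdef
  set m' : Multiset (ℝ × ℝ) := (wx + wy, b) ::ₘ rest with hm'
  have hb_mem : b ∈ Set.Icc a c := merge_mem_Icc hwx hwy hx hy
  have hbounds := cell_bounds hN hmono hk₁ hk₁0 hkN hcell
  have hb0 : 0 ≤ b := le_trans hbounds.1 hb_mem.1
  have hbkN : b ≤ kN := le_trans hb_mem.2 hbounds.2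
  have hrm : ∀ p ∈ rest, p ∈ m := fun p hp =>
    Multiset.mem_of_mem_erase (Multiset.mem_of_mem_erase hp)
  have hW' : ∀ p ∈ m', 0 < p.1 ∧ 0 ≤ p.2 := by
    intro p hp
    rcases Multiset.mem_cons.1 hp with rfl | hp
    · exact ⟨hw, hb0⟩
    · exact hWm p (hrm p hp)
  have key : ∀ g : ℝ → ℝ, ∫ z, g z ∂(mos m')
      = (∫ z, g z ∂(mos m)) + ((wx + wy) * g b - wx * g x - wy * g y) := by
    intro g
    rw [integral_mos g m' (fun p hp => (hW' p hp).1.le),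
        integral_mos g m (fun p hp => (hWm p hp).1.le), hm2, hm']
    simp only [Multiset.map_cons, Multiset.sum_cons]
    ring
  have hbb : (wx + wy) * b = wx * x + wy * y := by
    rw [hbdef]; field_simp
  rw [hF] at hFm
  obtain ⟨hprob, hiio, hcons, hpowi, hpow⟩ := hFm
  have huniv : mos m' Set.univ = mos m Set.univ := by
    rw [mos_apply, mos_apply, hm2, hm']
    simp only [Multiset.map_cons, Multiset.sum_cons,
      Measure.dirac_apply_of_mem (Set.mem_univ _), mul_one]
    rw [ENNReal.ofReal_add hwx.le hwy.le]
    ring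
  have hpow' : ∫ z, z ^ d ∂(mos m') ≤ M := by
    rw [key (fun z => z ^ d)]
    have hcv := merge_convex (g := fun z : ℝ => z ^ d) (x := x) (y := y) (hdeven.convexOn_pow) hwx hwy
    linarith
  have hobj_le : ∫ z, max 0 (z - k) ∂(mos m') ≤ S := by
    rw [key (fun z => max 0 (z - k))]
    have hcv := merge_convex (g := fun z : ℝ => max 0 (z - k)) (x := x) (y := y) (convexOn_call k) hwx hwy
    linarith
  have hF' : mos m' ∈ F := by
    rw [hF]
    refine ⟨⟨by rw [huniv]; exact hprob.measure_univ⟩, ?_, fun i => ⟨integrable_mos _ _, ?_⟩,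
      integrable_mos _ _, hpow'⟩
    · refine mos_eq_zero measurableSet_Iio ?_
      intro p hp
      simp only [Set.mem_Iio, not_lt]
      exact (hW' p hp).2
    · rcases cell_affine hN hmono hk₁ hcell i with hz | hz
      · rw [key (fun z => max 0 (z - ks i))]
        rw [hz x hx, hz y hy, hz b hb_mem, (hcons i).2]
        ring
      · rw [key (fun z => max 0 (z - ks i))]
        rw [hz x hx, hz y hy, hz b hb_mem, (hcons i).2]
        linear_combination hbb
  refine ⟨m', ⟨hW', hF', le_antisymm hobj_le (hlb _ hF'), xs, hxs, ?_, ?_⟩, ?_⟩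
  · obtain ⟨p, hpm, hpxs⟩ := hxsmem
    have hckN : c ≤ kN := hbounds.2
    have hpx : p ≠ (wx, x) := by
      intro h
      rw [h] at hpxs
      simp only at hpxs
      have h1 : x ≤ kN := le_trans hx.2 hckN
      linarith
    have hpy : p ≠ (wy, y) := by
      intro h
      rw [h] at hpxs
      simp only at hpxs
      have h1 : y ≤ kN := le_trans hy.2 hckN
      linarith
    have hp1 : p ∈ m.erase (wx, x) := (Multiset.mem_erase_of_ne hpx).2 hpm
    have hp2 : p ∈ rest := (Multiset.mem_erase_of_ne hpy).2 hp1
    exact ⟨p, Multiset.mem_cons_of_mem hp2, hpxs⟩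
  · intro p hp
    rcases Multiset.mem_cons.1 hp with rfl | hp
    · exact Or.inl hbkN
    · exact hxsall p (hrm p hp)
  · rw [hm2, hm']
    simp only [Multiset.card_cons]
    omega

end merge
section cleanup

variable {N : ℕ} (hN : 0 < N) {ks : Fin N → ℝ} {q : Fin N → ℝ} (hmono : Monotone ks)
  {k₁ kN : ℝ} (hk₁ : k₁ = ks ⟨0, hN⟩) (hk₁0 : 0 ≤ k₁)
  (hkN : kN = ks ⟨N - 1, Nat.sub_lt hN one_pos⟩)
  {d : ℕ} (hdeven : Even d) {M : ℝ} {F : Set (Measure ℝ)}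
  (hF : F = {μ | IsProbabilityMeasure μ ∧ μ (Set.Iio 0) = 0 ∧
      (∀ j, Integrable (fun x => max 0 (x - ks j)) μ ∧
        ∫ x, max 0 (x - ks j) ∂μ = q j) ∧
      Integrable (fun x => x ^ d) μ ∧ ∫ x, x ^ d ∂μ ≤ M})
  {k S : ℝ} (hlb : ∀ ν ∈ F, S ≤ ∫ x, max 0 (x - k) ∂ν)

include hN hmono hk₁ hk₁0 hkN hdeven hF hlb in
lemma cleanup : ∀ (n : ℕ) (m : Multiset (ℝ × ℝ)), Multiset.card m ≤ n →
    GoodRep F k kN S m →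
    ∃ m', GoodRep F k kN S m' ∧ ¬ BadPair N ks k₁ m' := by
  intro n
  induction n with
  | zero =>
      intro m hc hG
      by_cases hB : BadPair N ks k₁ m
      · obtain ⟨m', _, hlt⟩ := merge_step hN hmono hk₁ hk₁0 hkN hdeven hF hlb hG hB
        omega
      · exact ⟨m, hG, hB⟩
  | succ n ih =>
      intro m hc hG
      by_cases hB : BadPair N ks k₁ m
      · obtain ⟨m', hG', hlt⟩ := merge_step hN hmono hk₁ hk₁0 hkN hdeven hF hlb hG hB
        exact ih m' (by omega) hG'
      · exact ⟨m, hG, hB⟩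

end cleanup
section atomize

variable {N : ℕ} (hN : 0 < N) {ks : Fin N → ℝ} {q : Fin N → ℝ} (hmono : Monotone ks)
  {k₁ kN qN : ℝ} (hk₁ : k₁ = ks ⟨0, hN⟩) (hk₁0 : 0 ≤ k₁)
  (hkN : kN = ks ⟨N - 1, Nat.sub_lt hN one_pos⟩)
  (hqN : qN = q ⟨N - 1, Nat.sub_lt hN one_pos⟩) (hqNpos : 0 < qN)
  {d : ℕ} (hdeven : Even d) {M : ℝ} {F : Set (Measure ℝ)}
  (hF : F = {μ | IsProbabilityMeasure μ ∧ μ (Set.Iio 0) = 0 ∧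
      (∀ j, Integrable (fun x => max 0 (x - ks j)) μ ∧
        ∫ x, max 0 (x - ks j) ∂μ = q j) ∧
      Integrable (fun x => x ^ d) μ ∧ ∫ x, x ^ d ∂μ ≤ M})
  {k S : ℝ} (hk : 0 ≤ k) (hlb : ∀ ν ∈ F, S ≤ ∫ x, max 0 (x - k) ∂ν)

include hN hmono hk₁ hk₁0 hkN hqN hqNpos hdeven hF hk hlb in
lemma atomize (μ₀ : Measure ℝ) (hμ₀F : μ₀ ∈ F)
    (hμ₀obj : ∫ x, max 0 (x - k) ∂μ₀ = S) :
    ∃ m₀, GoodRep F k kN S m₀ := by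
  have hμ₀F' := hμ₀F
  rw [hF] at hμ₀F'
  obtain ⟨hprob, hiio, hcons, hpowi, hpowle⟩ := hμ₀F'
  haveI : IsProbabilityMeasure μ₀ := hprob
  have hk₁kN : k₁ ≤ kN := by
    rw [hk₁, hkN]; exact hmono (by simp [Fin.le_def])
  have hkN0 : 0 ≤ kN := le_trans hk₁0 hk₁kN
  have hae : ∀ᵐ z ∂μ₀, 0 ≤ z := by
    rw [ae_iff]
    have : {z : ℝ | ¬ 0 ≤ z} = Set.Iio 0 := by ext z; simp [not_le]
    rw [this]; exact hiio
  have hIntfN : Integrable (fun z => max 0 (z - kN)) μ₀ := by rw [hkN]; exact (hcons _).1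
  have hqN' : ∫ z, max 0 (z - kN) ∂μ₀ = qN := by rw [hkN, hqN]; exact (hcons _).2
  have hIntid : Integrable (fun z => z) μ₀ := by
    refine Integrable.mono' ((integrable_const kN).add hIntfN)
      measurable_id.aestronglyMeasurable ?_
    filter_upwards [hae] with z hz
    rw [Real.norm_eq_abs, abs_of_nonneg hz]
    have h2 := le_max_right 0 (z - kN)
    simp only [Pi.add_apply]
    linarith
  have hIntobj : Integrable (fun z => max 0 (z - k)) μ₀ := by
    refine Integrable.mono' hIntid.abs ((continuous_call k).aestronglyMeasurable) ?_
    filter_upwards [hae] with z hz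
    rw [Real.norm_eq_abs, abs_of_nonneg (le_max_left _ _)]
    have : max 0 (z - k) ≤ z := max_le hz (by linarith)
    exact le_trans this (le_abs_self z)
  -- region boundaries
  set K : ℕ → ℝ := fun j => ks ⟨min j (N - 1), by omega⟩ with hK
  have hKmono : ∀ {i j : ℕ}, i ≤ j → K i ≤ K j := by
    intro i j hij
    exact hmono (by simp [Fin.le_def]; omega)
  have hKtop : K (N - 1) = kN := by rw [hK, hkN]; simp
  have hK0 : K 0 = k₁ := by rw [hK, hk₁]; simp
  have hKkN : ∀ j, K j ≤ kN := by
    intro j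
    rw [hkN]
    exact hmono (by simp [Fin.le_def])
  have hK0le : ∀ i, 0 ≤ K i := fun i => le_trans hk₁0 (hK0 ▸ hKmono (Nat.zero_le i))
  set P : ℕ → Set ℝ := fun j => if j = 0 then Set.Iic (K 0) else Set.Ioc (K (j - 1)) (K j)
    with hP
  have hPmeas : ∀ j, MeasurableSet (P j) := by
    intro j
    rw [hP]
    by_cases h0 : j = 0 <;> simp [h0, measurableSet_Iic, measurableSet_Ioc]
  have hPmem0 : ∀ z : ℝ, z ∈ P 0 ↔ z ≤ K 0 := by
    intro z
    rw [hP]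
    simp
  have hPmemS : ∀ j : ℕ, j ≠ 0 → ∀ z : ℝ, z ∈ P j ↔ K (j - 1) < z ∧ z ≤ K j := by
    intro j h0 z
    rw [hP]
    simp [h0]
  -- splitting of integrals
  have hIic : ∀ g : ℝ → ℝ, Integrable g μ₀ → ∀ mi : ℕ,
      ∫ z in Set.Iic (K mi), g z ∂μ₀ = ∑ j ∈ Finset.range (mi + 1), ∫ z in P j, g z ∂μ₀ := by
    intro g hg mi
    induction mi with
    | zero => rw [Finset.sum_range_one, hP]; simp
    | succ n ihn =>
        have hun : Set.Iic (K n) ∪ Set.Ioc (K n) (K (n + 1)) = Set.Iic (K (n + 1)) :=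
          Set.Iic_union_Ioc_eq_Iic (hKmono (Nat.le_succ n))
        rw [← hun, setIntegral_union (Set.Iic_disjoint_Ioc le_rfl) measurableSet_Ioc
          hg.integrableOn hg.integrableOn, ihn]
        conv_rhs => rw [Finset.sum_range_succ]
        congr 1
  have hsplit : ∀ g : ℝ → ℝ, Integrable g μ₀ →
      ∫ z, g z ∂μ₀ = (∑ j ∈ Finset.range N, ∫ z in P j, g z ∂μ₀)
        + ∫ z in Set.Ioi kN, g z ∂μ₀ := by
    intro g hg
    have h1 := hIic g hg (N - 1)
    have hNr : N - 1 + 1 = N := by omega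
    rw [hNr, hKtop] at h1
    have hu : Set.Iic kN ∪ Set.Ioi kN = Set.univ := Set.Iic_union_Ioi
    calc ∫ z, g z ∂μ₀ = ∫ z in Set.univ, g z ∂μ₀ := by rw [setIntegral_univ]
      _ = _ := by
          rw [← hu, setIntegral_union (Set.Iic_disjoint_Ioi le_rfl) measurableSet_Ioi
            hg.integrableOn hg.integrableOn, h1]
  -- masses and barycenters
  set t : ℕ → ℝ := fun j => (μ₀ (P j)).toReal with ht
  set bb : ℕ → ℝ := fun j => (∫ z in P j, z ∂μ₀) / t j with hbbd
  set R : Finset ℕ := (Finset.range N).filter (fun j => μ₀ (P j) ≠ 0) with hR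
  set tt : ℝ := (μ₀ (Set.Ioi kN)).toReal with htt
  set bt : ℝ := (∫ z in Set.Ioi kN, z ∂μ₀) / tt with hbt
  set m₀ : Multiset (ℝ × ℝ) := (tt, bt) ::ₘ R.val.map (fun j => (t j, bb j)) with hm₀
  have hRfact : ∀ j ∈ R, j < N ∧ μ₀ (P j) ≠ 0 := by
    intro j hj
    rw [hR, Finset.mem_filter, Finset.mem_range] at hj
    exact hj
  have htpos : ∀ j ∈ R, 0 < t j :=
    fun j hj => ENNReal.toReal_pos (hRfact j hj).2 (measure_ne_top _ _)
  have httne : μ₀ (Set.Ioi kN) ≠ 0 := by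
    intro h0
    have hz : (fun z => max 0 (z - kN)) =ᵐ[μ₀] 0 := by
      rw [Filter.EventuallyEq, ae_iff]
      refine measure_mono_null ?_ h0
      intro z hz
      simp only [Set.mem_setOf_eq, Pi.zero_apply] at hz
      simp only [Set.mem_Ioi]
      by_contra hle
      push_neg at hle
      exact hz (max_eq_left (by linarith))
    have h1 : ∫ z, max 0 (z - kN) ∂μ₀ = 0 := by
      rw [integral_congr_ae hz]; simp
    rw [hqN'] at h1
    linarith
  have httpos : 0 < tt := ENNReal.toReal_pos httne (measure_ne_top _ _)
  -- barycenter above kN for the top region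
  have hbtgt : kN < bt := by
    have hpos : 0 < ∫ z in Set.Ioi kN, (z - kN) ∂μ₀ := by
      refine (setIntegral_pos_iff_support_of_nonneg_ae ?_ ?_).2 ?_
      · filter_upwards [ae_restrict_mem measurableSet_Ioi] with z hz
        simp only [Set.mem_Ioi] at hz
        simp only [Pi.zero_apply]
        linarith
      · exact (hIntid.sub (integrable_const kN)).integrableOn
      · have hsub2 : Set.Ioi kN ⊆ Function.support (fun z => z - kN) ∩ Set.Ioi kN := by
          intro z hz
          refine ⟨?_, hz⟩
          simp only [Function.mem_support]
          simp only [Set.mem_Ioi] at hz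
          intro hzz
          linarith [sub_eq_zero.1 hzz]
        exact lt_of_lt_of_le (pos_iff_ne_zero.2 httne) (measure_mono hsub2)
    have hsub : ∫ z in Set.Ioi kN, (z - kN) ∂μ₀
        = (∫ z in Set.Ioi kN, z ∂μ₀) - tt * kN := by
      rw [integral_sub hIntid.integrableOn
        (integrableOn_const (measure_ne_top _ _)), setIntegral_const, measureReal_def, smul_eq_mul]
    rw [hsub] at hpos
    rw [hbt, lt_div_iff₀ httpos]
    linarith
  have hbt0 : 0 ≤ bt := le_trans hkN0 hbtgt.le
  -- barycenter bounds for the strip regions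
  have hbub : ∀ j ∈ R, bb j ≤ K j := by
    intro j hj
    refine bary_le μ₀ (P j) (hRfact j hj).2 (K j) ?_ hIntid.integrableOn
    filter_upwards [ae_restrict_mem (hPmeas j)] with z hz
    by_cases h0 : j = 0
    · subst h0
      exact (hPmem0 z).1 hz
    · exact ((hPmemS j h0 z).1 hz).2
  have hblb : ∀ j ∈ R, j ≠ 0 → K (j - 1) ≤ bb j := by
    intro j hj h0
    refine bary_ge μ₀ (P j) (hRfact j hj).2 (K (j - 1)) ?_ hIntid.integrableOn
    filter_upwards [ae_restrict_mem (hPmeas j)] with z hz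
    exact ((hPmemS j h0 z).1 hz).1.le
  have hbl0 : 0 ∈ R → 0 ≤ bb 0 := by
    intro h0
    refine bary_ge μ₀ (P 0) (hRfact 0 h0).2 0 ?_ hIntid.integrableOn
    exact ae_restrict_of_ae hae
  have hb0 : ∀ j ∈ R, 0 ≤ bb j := by
    intro j hj
    by_cases h0 : j = 0
    · subst h0; exact hbl0 hj
    · exact le_trans (hK0le (j - 1)) (hblb j hj h0)
  have hbkN : ∀ j ∈ R, bb j ≤ kN := fun j hj => le_trans (hbub j hj) (hKkN j)
  -- affine integrals over regions
  have haff : ∀ (A : Set ℝ), μ₀ A ≠ 0 → ∀ κ : ℝ, ∫ z in A, (z - κ) ∂μ₀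
      = (μ₀ A).toReal * ((∫ z in A, z ∂μ₀) / (μ₀ A).toReal - κ) := by
    intro A hne κ
    rw [integral_sub hIntid.integrableOn (integrableOn_const (measure_ne_top _ _)),
      setIntegral_const, measureReal_def, smul_eq_mul]
    have htne : (μ₀ A).toReal ≠ 0 := ENNReal.toReal_ne_zero.2 ⟨hne, measure_ne_top _ _⟩
    field_simp
  -- constraint integral over each strip region
  have hregc : ∀ i : Fin N, ∀ j ∈ R,
      ∫ z in P j, max 0 (z - ks i) ∂μ₀ = t j * max 0 (bb j - ks i) := by
    intro i j hj
    by_cases h0 : j = 0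
    · subst h0
      have hks : k₁ ≤ ks i := by rw [hk₁]; exact hmono (by simp [Fin.le_def])
      have hz : ∀ z ∈ P 0, max 0 (z - ks i) = 0 := by
        intro z hz
        have hzle : z ≤ k₁ := hK0 ▸ (hPmem0 z).1 hz
        exact max_eq_left (by linarith)
      have h1 : ∫ z in P 0, max 0 (z - ks i) ∂μ₀ = 0 := by
        rw [setIntegral_congr_fun (hPmeas 0) hz]
        simp
      rw [h1, max_eq_left (by
        have := hbub 0 hj
        rw [hK0] at this
        linarith)]
      ring
    · have hjN : j < N := (hRfact j hj).1
      have hKj1 : K (j - 1) = ks ⟨j - 1, by omega⟩ := by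
        rw [hK]
        exact congrArg ks (Fin.mk_eq_mk.2 (by omega))
      have hKj : K j = ks ⟨j, hjN⟩ := by
        rw [hK]
        exact congrArg ks (Fin.mk_eq_mk.2 (by omega))
      by_cases hij : (i : ℕ) ≤ j - 1
      · -- payoff is linear on the region
        have hksle : ks i ≤ K (j - 1) := by
          rw [hKj1]; exact hmono (by simp [Fin.le_def]; omega)
        have hz : ∀ z ∈ P j, max 0 (z - ks i) = z - ks i := by
          intro z hz
          have := ((hPmemS j h0 z).1 hz).1
          exact max_eq_right (by linarith)
        rw [setIntegral_congr_fun (hPmeas j) hz, haff (P j) (hRfact j hj).2 (ks i),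
          max_eq_right (by linarith [hblb j hj h0])]
      · -- payoff vanishes on the region
        have hksge : K j ≤ ks i := by
          rw [hKj]; exact hmono (by simp [Fin.le_def]; omega)
        have hz : ∀ z ∈ P j, max 0 (z - ks i) = 0 := by
          intro z hz
          have := ((hPmemS j h0 z).1 hz).2
          exact max_eq_left (by linarith)
        rw [setIntegral_congr_fun (hPmeas j) hz, max_eq_left (by linarith [hbub j hj])]
        simp
  -- constraint integral over the top region
  have htopc : ∀ i : Fin N, ∫ z in Set.Ioi kN, max 0 (z - ks i) ∂μ₀
      = tt * max 0 (bt - ks i) := by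
    intro i
    have hksle : ks i ≤ kN := by rw [hkN]; exact hmono (by simp [Fin.le_def]; omega)
    have hz : ∀ z ∈ Set.Ioi kN, max 0 (z - ks i) = z - ks i := by
      intro z hz
      simp only [Set.mem_Ioi] at hz
      exact max_eq_right (by linarith)
    rw [setIntegral_congr_fun measurableSet_Ioi hz, haff _ httne,
      max_eq_right (by linarith)]
  -- zero contribution of empty regions
  have hzero_off : ∀ (g : ℝ → ℝ), ∀ j ∈ Finset.range N, j ∉ R →
      ∫ z in P j, g z ∂μ₀ = 0 := by
    intro g j hjr hjR
    have : μ₀ (P j) = 0 := by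
      by_contra hne
      exact hjR (Finset.mem_filter.2 ⟨hjr, hne⟩)
    rw [Measure.restrict_eq_zero.2 this]
    simp
  -- integral of the atomic measure
  have hwnn : ∀ p ∈ m₀, 0 ≤ p.1 := by
    intro p hp
    rw [hm₀] at hp
    rcases Multiset.mem_cons.1 hp with rfl | hp
    · exact httpos.le
    · obtain ⟨j, hj, rfl⟩ := Multiset.mem_map.1 hp
      exact (htpos j (by rwa [← Finset.mem_val])).le
  have hintm₀ : ∀ g : ℝ → ℝ, ∫ z, g z ∂(mos m₀)
      = tt * g bt + ∑ j ∈ R, t j * g (bb j) := by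
    intro g
    rw [integral_mos g m₀ hwnn, hm₀]
    simp only [Multiset.map_cons, Multiset.sum_cons, Multiset.map_map]
    rfl
  -- the measure of the whole line
  have hsum1 : tt + ∑ j ∈ R, t j = 1 := by
    have h1 := hsplit (fun _ => (1 : ℝ)) (integrable_const 1)
    rw [integral_const, setIntegral_const, measureReal_def, measureReal_def, measure_univ] at h1
    simp only [ENNReal.toReal_one, one_smul, smul_eq_mul, mul_one] at h1
    have h2 : ∀ j ∈ Finset.range N, ∫ z in P j, (1 : ℝ) ∂μ₀ = t j := by
      intro j _
      rw [setIntegral_const, smul_eq_mul, mul_one, ht, measureReal_def]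
    rw [Finset.sum_congr rfl h2] at h1
    have h3 : ∑ j ∈ Finset.range N, t j = ∑ j ∈ R, t j := by
      refine (Finset.sum_subset (Finset.filter_subset _ _) ?_).symm
      intro j hjr hjR
      have : μ₀ (P j) = 0 := by
        by_contra hne
        exact hjR (Finset.mem_filter.2 ⟨hjr, hne⟩)
      rw [ht]
      simp [this]
    rw [h3] at h1
    linarith
  have hWm₀ : ∀ p ∈ m₀, 0 < p.1 ∧ 0 ≤ p.2 := by
    intro p hp
    rw [hm₀] at hp
    rcases Multiset.mem_cons.1 hp with rfl | hp
    · exact ⟨httpos, hbt0⟩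
    · obtain ⟨j, hj, rfl⟩ := Multiset.mem_map.1 hp
      have hjR : j ∈ R := by rwa [← Finset.mem_val]
      exact ⟨htpos j hjR, hb0 j hjR⟩
  -- membership in F
  have hunivm₀ : mos m₀ Set.univ = 1 := by
    rw [mos_apply, hm₀]
    simp only [Multiset.map_cons, Multiset.sum_cons, Multiset.map_map,
      Measure.dirac_apply_of_mem (Set.mem_univ _), mul_one]
    have : (Multiset.map (fun j => ENNReal.ofReal (t j)) R.val).sum
        = ∑ j ∈ R, ENNReal.ofReal (t j) := rfl
    rw [show (Multiset.map ((fun p : ℝ × ℝ => ENNReal.ofReal p.1) ∘ fun j => (t j, bb j)) R.val).sum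
        = ∑ j ∈ R, ENNReal.ofReal (t j) from rfl]
    rw [← ENNReal.ofReal_sum_of_nonneg (fun j hj => (htpos j hj).le),
      ← ENNReal.ofReal_add httpos.le (Finset.sum_nonneg (fun j hj => (htpos j hj).le)), hsum1]
    simp
  have hconsm₀ : ∀ i : Fin N, ∫ z, max 0 (z - ks i) ∂(mos m₀) = q i := by
    intro i
    rw [hintm₀ (fun z => max 0 (z - ks i))]
    have h2 : ∀ j ∈ R, t j * max 0 (bb j - ks i) = ∫ z in P j, max 0 (z - ks i) ∂μ₀ :=
      fun j hj => (hregc i j hj).symm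
    have h3 : ∑ j ∈ R, ∫ z in P j, max 0 (z - ks i) ∂μ₀
        = ∑ j ∈ Finset.range N, ∫ z in P j, max 0 (z - ks i) ∂μ₀ :=
      Finset.sum_subset (Finset.filter_subset _ _) (hzero_off _)
    rw [Finset.sum_congr rfl h2, h3, ← htopc i]
    have h4 := hsplit (fun z => max 0 (z - ks i)) (hcons i).1
    rw [← (hcons i).2, h4]
    ring
  have hjen : ∀ (A : Set ℝ), MeasurableSet A → μ₀ A ≠ 0 → ∀ g : ℝ → ℝ,
      ConvexOn ℝ Set.univ g → Continuous g → Integrable g (μ₀.restrict A) →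
      (μ₀ A).toReal * g ((∫ z in A, z ∂μ₀) / (μ₀ A).toReal) ≤ ∫ z in A, g z ∂μ₀ :=
    fun A hA hne g hg hgc hgi => region_jensen μ₀ A hA hne g hg hgc hIntid.integrableOn hgi
  have hconvle : ∀ g : ℝ → ℝ, ConvexOn ℝ Set.univ g → Continuous g → Integrable g μ₀ →
      ∫ z, g z ∂(mos m₀) ≤ ∫ z, g z ∂μ₀ := by
    intro g hg hgc hgi
    rw [hintm₀ g, hsplit g hgi]
    have h1 : tt * g bt ≤ ∫ z in Set.Ioi kN, g z ∂μ₀ :=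
      hjen _ measurableSet_Ioi httne g hg hgc hgi.integrableOn
    have h2 : ∑ j ∈ R, t j * g (bb j) ≤ ∑ j ∈ R, ∫ z in P j, g z ∂μ₀ := by
      refine Finset.sum_le_sum ?_
      intro j hj
      exact hjen _ (hPmeas j) (hRfact j hj).2 g hg hgc hgi.integrableOn
    have h3 : ∑ j ∈ R, ∫ z in P j, g z ∂μ₀ = ∑ j ∈ Finset.range N, ∫ z in P j, g z ∂μ₀ :=
      Finset.sum_subset (Finset.filter_subset _ _) (hzero_off _)
    rw [← h3]
    linarith
  have hpowm₀ : ∫ z, z ^ d ∂(mos m₀) ≤ M :=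
    le_trans (hconvle _ hdeven.convexOn_pow (continuous_pow d) hpowi) hpowle
  have hobjm₀le : ∫ z, max 0 (z - k) ∂(mos m₀) ≤ S :=
    le_trans (hconvle _ (convexOn_call k) (continuous_call k) hIntobj) (le_of_eq hμ₀obj)
  have hFm₀ : mos m₀ ∈ F := by
    rw [hF]
    refine ⟨⟨hunivm₀⟩, ?_, fun i => ⟨integrable_mos _ _, hconsm₀ i⟩, integrable_mos _ _, hpowm₀⟩
    refine mos_eq_zero measurableSet_Iio ?_
    intro p hp
    simp only [Set.mem_Iio, not_lt]
    exact (hWm₀ p hp).2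
  refine ⟨m₀, hWm₀, hFm₀, le_antisymm hobjm₀le (hlb _ hFm₀), bt, hbtgt, ?_, ?_⟩
  · exact ⟨(tt, bt), by rw [hm₀]; exact Multiset.mem_cons_self _ _, rfl⟩
  · intro p hp
    rw [hm₀] at hp
    rcases Multiset.mem_cons.1 hp with rfl | hp
    · exact Or.inr rfl
    · obtain ⟨j, hj, rfl⟩ := Multiset.mem_map.1 hp
      exact Or.inl (hbkN j (by rwa [← Finset.mem_val]))

end atomize
/-- Lemma 5: in the univariate problem, if the infimum is attained then it is attained by a
finitely atomic measure with exactly one atom in `(k_N, ∞)` and at most one atom in each of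
the intervals `[0, k₁], [k₁, k₂], …, [k_{N-1}, k_N]`. -/
theorem univariate_atom_location
    (N : ℕ) (hN : 0 < N)
    (ks : Fin N → ℝ) (q : Fin N → ℝ)
    (hmono : Monotone ks)
    (k₁ : ℝ) (hk₁ : k₁ = ks ⟨0, hN⟩) (hk₁0 : 0 ≤ k₁)
    (kN : ℝ) (hkN : kN = ks ⟨N - 1, Nat.sub_lt hN one_pos⟩)
    (qN : ℝ) (hqN : qN = q ⟨N - 1, Nat.sub_lt hN one_pos⟩) (hqNpos : 0 < qN)
    (k : ℝ) (hk : 0 ≤ k)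
    (d : ℕ) (hd2 : 2 ≤ d) (hdeven : Even d)
    (M : ℝ) (hM : 0 < M)
    (F : Set (Measure ℝ))
    (hF : F = {μ | IsProbabilityMeasure μ ∧ μ (Set.Iio 0) = 0 ∧
        (∀ j, Integrable (fun x => max 0 (x - ks j)) μ ∧
          ∫ x, max 0 (x - ks j) ∂μ = q j) ∧
        Integrable (fun x => x ^ d) μ ∧ ∫ x, x ^ d ∂μ ≤ M})
    (hatt : ∃ μ ∈ F, ∫ x, max 0 (x - k) ∂μ =
        sInf ((fun ν => ∫ x, max 0 (x - k) ∂ν) '' F)) :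
    ∃ μ ∈ F, ∫ x, max 0 (x - k) ∂μ = sInf ((fun ν => ∫ x, max 0 (x - k) ∂ν) '' F) ∧
      -- μ is finitely atomic
      (∃ (J : ℕ) (ω : Fin J → ℝ) (pts : Fin J → ℝ),
        (∀ j, 0 < ω j) ∧ (∀ j, 0 ≤ pts j) ∧
        μ = ∑ j, ENNReal.ofReal (ω j) • Measure.dirac (pts j)) ∧
      -- exactly one atom in (kN, ∞)
      (∃ xstar : ℝ, kN < xstar ∧ 0 < μ {xstar} ∧ μ (Set.Ioi kN \ {xstar}) = 0) ∧
      -- at most one atom in [0, k₁]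
      (∀ x y : ℝ, x ∈ Set.Icc 0 k₁ → y ∈ Set.Icc 0 k₁ →
        0 < μ {x} → 0 < μ {y} → x = y) ∧
      -- at most one atom in each [k_j, k_{j+1}]
      (∀ (j : ℕ) (hj : j + 1 < N), ∀ x y : ℝ,
        x ∈ Set.Icc (ks ⟨j, by omega⟩) (ks ⟨j + 1, hj⟩) →
        y ∈ Set.Icc (ks ⟨j, by omega⟩) (ks ⟨j + 1, hj⟩) →
        0 < μ {x} → 0 < μ {y} → x = y) := by
  obtain ⟨μ₀, hμ₀F, hμ₀obj⟩ := hatt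
  set S := sInf ((fun ν => ∫ x, max 0 (x - k) ∂ν) '' F) with hSdef
  have hbdd : BddBelow ((fun ν => ∫ x, max 0 (x - k) ∂ν) '' F) := by
    refine ⟨0, ?_⟩
    rintro v ⟨ν, hν, rfl⟩
    exact integral_nonneg (fun z => le_max_left _ _)
  have hlb : ∀ ν ∈ F, S ≤ ∫ x, max 0 (x - k) ∂ν := fun ν hν => csInf_le hbdd ⟨ν, hν, rfl⟩
  obtain ⟨m₀, hG₀⟩ := atomize hN hmono hk₁ hk₁0 hkN hqN hqNpos hdeven hF hk hlb μ₀ hμ₀F hμ₀obj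
  obtain ⟨m', hG', hnB⟩ := cleanup hN hmono hk₁ hk₁0 hkN hdeven hF hlb
    (Multiset.card m₀) m₀ le_rfl hG₀
  obtain ⟨hW', hF', hobj', xs, hxs, hxsmem, hxsall⟩ := hG'
  have hwpos : ∀ p ∈ m', 0 < p.1 := fun p hp => (hW' p hp).1
  refine ⟨mos m', hF', hobj', ?_, ?_, ?_, ?_⟩
  · -- finitely atomic representation
    refine ⟨m'.toList.length, fun i => (m'.toList.get i).1, fun i => (m'.toList.get i).2,
      ?_, ?_, mos_fin_sum m'⟩
    · intro i
      exact (hW' _ (Multiset.mem_toList.1 (m'.toList.get_mem i))).1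
    · intro i
      exact (hW' _ (Multiset.mem_toList.1 (m'.toList.get_mem i))).2
  · -- exactly one atom above kN
    obtain ⟨p, hpm, hpx⟩ := hxsmem
    refine ⟨xs, hxs, (mos_singleton_pos hwpos xs).2 ⟨p, hpm, hpx⟩, ?_⟩
    refine mos_eq_zero (measurableSet_Ioi.diff (measurableSet_singleton xs)) ?_
    intro p' hp' hmem
    rcases hxsall p' hp' with h | h
    · exact absurd hmem.1 (not_lt.2 h)
    · exact hmem.2 h
  · -- at most one atom in [0, k₁]
    intro x y hxI hyI hx0 hy0
    by_contra hne
    obtain ⟨p₁, hp₁, hp₁x⟩ := (mos_singleton_pos hwpos x).1 hx0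
    obtain ⟨p₂, hp₂, hp₂y⟩ := (mos_singleton_pos hwpos y).1 hy0
    have hp12 : p₂ ≠ p₁ := by
      intro h
      rw [h, hp₁x] at hp₂y
      exact hne hp₂y
    exact hnB ⟨p₁, hp₁, p₂, (Multiset.mem_erase_of_ne hp12).2 hp₂,
      by rw [hp₁x, hp₂y]; exact hne, 0, k₁, Or.inl ⟨rfl, rfl⟩,
      by rw [hp₁x]; exact hxI, by rw [hp₂y]; exact hyI⟩
  · -- at most one atom in each inner interval
    intro j hj x y hxI hyI hx0 hy0
    by_contra hne
    obtain ⟨p₁, hp₁, hp₁x⟩ := (mos_singleton_pos hwpos x).1 hx0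
    obtain ⟨p₂, hp₂, hp₂y⟩ := (mos_singleton_pos hwpos y).1 hy0
    have hp12 : p₂ ≠ p₁ := by
      intro h
      rw [h, hp₁x] at hp₂y
      exact hne hp₂y
    exact hnB ⟨p₁, hp₁, p₂, (Multiset.mem_erase_of_ne hp12).2 hp₂,
      by rw [hp₁x, hp₂y]; exact hne, ks ⟨j, by omega⟩, ks ⟨j + 1, hj⟩,
      Or.inr ⟨j, hj, rfl, rfl⟩,
      by rw [hp₁x]; exact hxI, by rw [hp₂y]; exact hyI⟩
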